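/- Identifiability of the monotone single index model: Suppose 𝒳 ⊂ ℝ^d is convex with nonempty interior, X has an everywhere-positive Lebesgue density on 𝒳, and f, h : ℝ → ℝ are nondecreasing, left-continuous on the intervals C_α = {αᵀx : x ∈ 𝒳} and C_β respectively (with no discontinuity at the boundary), with f non-constant on C_α, where α, β are unit vectors. If f(αᵀX) = h(βᵀX) almost surely, then α = β and f = h on C_α. -/

import Mathlib

open MeasureTheory
open scoped InnerProductSpace

/-- identifiability of the monotone single index model. If `𝒳` is convex with
nonempty interior, `X` has an everywhere-positive Lebesgue density on `𝒳`, `f, h` are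
nondecreasing and left-continuous on `C_α` resp. `C_β` with no discontinuity at the
boundaries, `f` is non-constant on `C_α`, and `f(αᵀX) = h(βᵀX)` a.s. for unit vectors
`α, β`, then `α = β` and `f = h` on `C_α`. -/
lemma aux_const_of_loc {f : ℝ → ℝ} {J : Set ℝ} (hJ : J.OrdConnected)
    (hloc : ∀ s ∈ J, ∃ δ > 0, ∀ u, |u - s| < δ → f u = f s) :
    ∀ s ∈ J, ∀ t ∈ J, f s = f t := by
  have key : ∀ s ∈ J, ∀ t ∈ J, s ≤ t → f t = f s := by
    intro s hs t ht hst
    set A := {u : ℝ | u ∈ Set.Icc s t ∧ f u = f s} with hA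
    have hsA : s ∈ A := ⟨⟨le_refl s, hst⟩, rfl⟩
    have hAne : A.Nonempty := ⟨s, hsA⟩
    have hAbdd : BddAbove A := ⟨t, fun u hu => hu.1.2⟩
    set m := sSup A with hm
    have hmt : m ≤ t := csSup_le hAne fun u hu => hu.1.2
    have hsm : s ≤ m := le_csSup hAbdd hsA
    have hmJ : m ∈ J := hJ.out hs ht ⟨hsm, hmt⟩
    obtain ⟨δ, hδ, hδc⟩ := hloc m hmJ
    have hfm : f m = f s := by
      obtain ⟨u, huA, hu⟩ := exists_lt_of_lt_csSup hAne (by linarith : m - δ < m)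
      have hum : u ≤ m := le_csSup hAbdd huA
      have h2 : f u = f m := hδc u (by rw [abs_sub_lt_iff]; constructor <;> linarith)
      rw [← h2, huA.2]
    rcases eq_or_lt_of_le hmt with heq | hlt
    · rw [← heq]; exact hfm
    · exfalso
      set u := min (m + δ/2) t with hu
      have hum : m < u := lt_min (by linarith) hlt
      have hule : u ≤ m + δ/2 := min_le_left _ _
      have huA : u ∈ A := by
        refine ⟨⟨le_trans hsm hum.le, min_le_right _ _⟩, ?_⟩
        have h3 : f u = f m := hδc u (by rw [abs_sub_lt_iff]; constructor <;> linarith)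
        rw [h3, hfm]
      exact absurd (le_csSup hAbdd huA) (not_le.mpr hum)
  intro s hs t ht
  rcases le_total s t with hle | hle
  · exact (key s hs t ht hle).symm
  · exact key t ht s hs hle

lemma aux_int_cl {J : Set ℝ} (hJc : Convex ℝ J) (hJo : IsOpen J) :
    interior (closure J) ⊆ J := by
  intro u hu
  rcases J.eq_empty_or_nonempty with rfl | ⟨y, hy⟩
  · simp at hu
  rcases eq_or_ne u y with rfl | hne
  · exact hy
  obtain ⟨ε0, hε0, hballsub⟩ := Metric.isOpen_iff.mp isOpen_interior u hu
  set ε := ε0 / (2 * (|u - y| + 1)) with hε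
  have habs : (0:ℝ) < |u - y| + 1 := by positivity
  have hεpos : 0 < ε := by positivity
  set z := u + ε * (u - y) with hz
  have hzcl : z ∈ closure J := by
    have hd : dist z u < ε0 := by
      rw [Real.dist_eq]
      have hzu : z - u = ε * (u - y) := by rw [hz]; ring
      rw [hzu, abs_mul, abs_of_pos hεpos]
      have h1 : ε * |u - y| < ε * (|u - y| + 1) :=
        mul_lt_mul_of_pos_left (by linarith) hεpos
      have h2 : ε * (|u - y| + 1) = ε0 / 2 := by
        rw [hε]; field_simp
      linarith
    exact interior_subset (hballsub hd)
  have h1 : (0:ℝ) < 1 + ε := by linarith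
  have hcombo : (1/(1+ε)) • z + (ε/(1+ε)) • y = u := by
    simp only [smul_eq_mul, hz]
    field_simp
    ring
  have hmem := hJc.combo_closure_interior_mem_interior hzcl
      (by rwa [hJo.interior_eq]) (a := 1/(1+ε)) (b := ε/(1+ε))
      (by positivity) (by positivity) (by field_simp)
  rw [hcombo, hJo.interior_eq] at hmem
  exact hmem

theorem stmt6 {d : ℕ} {Ω : Type*} [MeasurableSpace Ω]
    (μ : Measure Ω) [IsProbabilityMeasure μ]
    (𝒳 : Set (EuclideanSpace ℝ (Fin d)))
    (hconv : Convex ℝ 𝒳) (hint : (interior 𝒳).Nonempty)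
    (X : Ω → EuclideanSpace ℝ (Fin d)) (hXmeas : Measurable X)
    (ρ : EuclideanSpace ℝ (Fin d) → ENNReal) (hρmeas : Measurable ρ)
    (hlaw : μ.map X = volume.withDensity ρ)
    (hρpos : ∀ x ∈ 𝒳, 0 < ρ x) (hρzero : ∀ x ∉ 𝒳, ρ x = 0)
    (α β : EuclideanSpace ℝ (Fin d)) (hα : ‖α‖ = 1) (hβ : ‖β‖ = 1)
    (f h : ℝ → ℝ) (hf : Monotone f) (hh : Monotone h)
    -- left-continuity on C_α resp. C_β
    (hflc : ∀ t ∈ (fun x => ⟪α, x⟫_ℝ) '' 𝒳, ContinuousWithinAt f (Set.Iic t) t)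
    (hhlc : ∀ t ∈ (fun x => ⟪β, x⟫_ℝ) '' 𝒳, ContinuousWithinAt h (Set.Iic t) t)
    -- no discontinuity point at the boundaries of C_α resp. C_β
    (hfbd : ∀ t ∈ (fun x => ⟪α, x⟫_ℝ) '' 𝒳, t ∈ frontier ((fun x => ⟪α, x⟫_ℝ) '' 𝒳) →
      ContinuousWithinAt f ((fun x => ⟪α, x⟫_ℝ) '' 𝒳) t)
    (hhbd : ∀ t ∈ (fun x => ⟪β, x⟫_ℝ) '' 𝒳, t ∈ frontier ((fun x => ⟪β, x⟫_ℝ) '' 𝒳) →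
      ContinuousWithinAt h ((fun x => ⟪β, x⟫_ℝ) '' 𝒳) t)
    -- f is non-constant on C_α
    (hnc : ∃ s ∈ (fun x => ⟪α, x⟫_ℝ) '' 𝒳, ∃ t ∈ (fun x => ⟪α, x⟫_ℝ) '' 𝒳, f s ≠ f t)
    -- f(αᵀX) = h(βᵀX) almost surely
    (heq : ∀ᵐ ω ∂μ, f (⟪α, X ω⟫_ℝ) = h (⟪β, X ω⟫_ℝ)) :
    α = β ∧ Set.EqOn f h ((fun x => ⟪α, x⟫_ℝ) '' 𝒳) := by
  -- Step 1: ball picking lemma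
  have hball : ∀ (x : EuclideanSpace ℝ (Fin d)) (r : ℝ), 0 < r → Metric.ball x r ⊆ 𝒳 →
      ∃ x', x' ∈ Metric.ball x r ∧ f ⟪α, x'⟫_ℝ = h ⟪β, x'⟫_ℝ := by
    have hmα : Measurable fun x : EuclideanSpace ℝ (Fin d) => ⟪α, x⟫_ℝ :=
      (continuous_const.inner continuous_id).measurable
    have hmβ : Measurable fun x : EuclideanSpace ℝ (Fin d) => ⟪β, x⟫_ℝ :=
      (continuous_const.inner continuous_id).measurable
    have hEmeas : MeasurableSet {x : EuclideanSpace ℝ (Fin d) | f ⟪α, x⟫_ℝ = h ⟪β, x⟫_ℝ} :=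
      measurableSet_eq_fun (hf.measurable.comp hmα) (hh.measurable.comp hmβ)
    have h0 : (volume.withDensity ρ)
        {x : EuclideanSpace ℝ (Fin d) | f ⟪α, x⟫_ℝ = h ⟪β, x⟫_ℝ}ᶜ = 0 := by
      rw [← hlaw, Measure.map_apply hXmeas hEmeas.compl]
      exact ae_iff.mp heq
    rw [withDensity_apply ρ hEmeas.compl] at h0
    have h1 := (setLIntegral_eq_zero_iff hEmeas.compl hρmeas).mp h0
    have hae : ∀ᵐ x : EuclideanSpace ℝ (Fin d), x ∈ 𝒳 → f ⟪α, x⟫_ℝ = h ⟪β, x⟫_ℝ := by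
      filter_upwards [h1] with x hx hx𝒳
      by_contra hne
      exact absurd (hx hne) (hρpos x hx𝒳).ne'
    intro x r hr hsub
    by_contra hcon
    push_neg at hcon
    have hsub2 : Metric.ball x r ⊆ {x : EuclideanSpace ℝ (Fin d) |
        ¬ (x ∈ 𝒳 → f ⟪α, x⟫_ℝ = h ⟪β, x⟫_ℝ)} := by
      intro y hy
      simp only [Set.mem_setOf_eq, Classical.not_imp]
      exact ⟨hsub hy, hcon y hy⟩
    have h2 := measure_mono_null hsub2 (ae_iff.mp hae)
    exact absurd h2 (Metric.measure_ball_pos volume x hr).ne'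
  -- Step 2: properties of J
  set J := (fun x => ⟪α, x⟫_ℝ) '' interior 𝒳 with hJdef
  have hcoe : (fun x : EuclideanSpace ℝ (Fin d) => ⟪α, x⟫_ℝ) = ⇑(innerSL ℝ α) := by
    ext x; simp
  have hsurj : Function.Surjective (innerSL ℝ α) := by
    intro t
    refine ⟨t • α, ?_⟩
    show ⟪α, t • α⟫_ℝ = t
    rw [real_inner_smul_right, real_inner_self_eq_norm_mul_norm, hα]; ring
  have hJopen : IsOpen J := by
    rw [hJdef, hcoe]
    exact (ContinuousLinearMap.isOpenMap (innerSL ℝ α) hsurj) _ isOpen_interior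
  have hJconv : Convex ℝ J := by
    rw [hJdef, hcoe]
    exact (hconv.interior).linear_image (innerSL ℝ α : _ →L[ℝ] ℝ).toLinearMap
  have hJsubC : J ⊆ (fun x => ⟪α, x⟫_ℝ) '' 𝒳 := Set.image_mono interior_subset
  have hCsub : (fun x => ⟪α, x⟫_ℝ) '' 𝒳 ⊆ closure J := by
    rintro _ ⟨x, hx, rfl⟩
    obtain ⟨y, hy⟩ := hint
    rw [Metric.mem_closure_iff]
    intro ε hε
    set C := |⟪α, y - x⟫_ℝ| with hC
    have hC0 : 0 ≤ C := hC ▸ abs_nonneg _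
    set t := min 1 (ε / (2 * (C + 1))) with ht
    have ht0 : 0 < t := lt_min one_pos (by positivity)
    have ht1 : t ≤ 1 := min_le_left _ _
    have hmem : x + t • (y - x) ∈ interior 𝒳 :=
      hconv.add_smul_sub_mem_interior hx hy ⟨ht0, ht1⟩
    refine ⟨⟪α, x + t • (y - x)⟫_ℝ, ⟨_, hmem, rfl⟩, ?_⟩
    rw [inner_add_right, real_inner_smul_right, Real.dist_eq]
    have h1 : |⟪α, x⟫_ℝ - (⟪α, x⟫_ℝ + t * ⟪α, y - x⟫_ℝ)| = t * C := by
      have he : ⟪α, x⟫_ℝ - (⟪α, x⟫_ℝ + t * ⟪α, y - x⟫_ℝ) = -(t * ⟪α, y - x⟫_ℝ) := by ring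
      rw [he, abs_neg, abs_mul, abs_of_pos ht0, hC]
    rw [h1]
    have h2 : t ≤ ε / (2 * (C + 1)) := min_le_right _ _
    have h3 : t * C ≤ (ε / (2 * (C + 1))) * C :=
      mul_le_mul_of_nonneg_right h2 hC0
    have h4 : (ε / (2 * (C + 1))) * C < ε := by
      rw [div_mul_eq_mul_div, div_lt_iff₀ (by positivity)]
      nlinarith
    linarith
  -- useful: inner bound within balls
  have hib : ∀ (γ z w : EuclideanSpace ℝ (Fin d)), ‖γ‖ = 1 → ∀ r : ℝ,
      z ∈ Metric.ball w r → |⟪γ, z⟫_ℝ - ⟪γ, w⟫_ℝ| < r := by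
    intro γ z w hγ r hz
    rw [← inner_sub_right]
    calc |⟪γ, z - w⟫_ℝ| ≤ ‖γ‖ * ‖z - w‖ := abs_real_inner_le_norm _ _
    _ = ‖z - w‖ := by rw [hγ, one_mul]
    _ < r := by rw [← dist_eq_norm]; exact hz
  -- Step 3: α = β
  have hab : α = β := by
    by_contra hne
    set c := ⟪α, β⟫_ℝ with hc
    have hc1 : c < 1 := by
      have hv0 : (0:ℝ) < ‖α - β‖ := norm_pos_iff.mpr (sub_ne_zero.mpr hne)
      have hsq := @norm_sub_sq_real (EuclideanSpace ℝ (Fin d)) _ _ α β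
      rw [hα, hβ] at hsq
      nlinarith
    set v := α - β with hv
    have hvα : ⟪α, v⟫_ℝ = 1 - c := by
      rw [hv, inner_sub_right, real_inner_self_eq_norm_mul_norm, hα, hc]; ring
    have hvβ : ⟪β, v⟫_ℝ = c - 1 := by
      rw [hv, inner_sub_right, real_inner_self_eq_norm_mul_norm, hβ, hc, real_inner_comm]; ring
    have hvn : (0:ℝ) < ‖v‖ := norm_pos_iff.mpr (sub_ne_zero.mpr hne)
    -- local constancy of f around points of J
    have hloc : ∀ s ∈ J, ∃ δ > 0, ∀ u, |u - s| < δ → f u = f s := by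
      rintro _ ⟨x, hx, rfl⟩
      obtain ⟨ε, hε, hbs⟩ := Metric.isOpen_iff.mp isOpen_interior x hx
      show ∃ δ > 0, ∀ u, |u - ⟪α, x⟫_ℝ| < δ → f u = f ⟪α, x⟫_ℝ
      set s := ⟪α, x⟫_ℝ with hs
      set t := ε / (2 * ‖v‖) with htd
      have ht0 : 0 < t := by positivity
      have h1c : (0:ℝ) < 1 - c := by linarith
      set r := min (ε/4) (t*(1-c)/2) with hrd
      have hr0 : 0 < r := lt_min (by positivity) (by positivity)
      have hr1 : r ≤ ε/4 := min_le_left _ _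
      have hr2 : r ≤ t*(1-c)/2 := min_le_right _ _
      have hdist : ∀ σ : ℝ, |σ| = 1 → ∀ z, z ∈ Metric.ball (x + (σ*t) • v) r → z ∈ 𝒳 := by
        intro σ hσ z hz
        apply interior_subset
        apply hbs
        have h1 : dist z x ≤ dist z (x + (σ*t) • v) + dist (x + (σ*t) • v) x :=
          dist_triangle _ _ _
        have h2 : dist (x + (σ*t) • v) x = |σ| * t * ‖v‖ := by
          rw [dist_eq_norm, add_sub_cancel_left, norm_smul, Real.norm_eq_abs, abs_mul,
            abs_of_pos ht0]
        rw [hσ, one_mul] at h2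
        have h3 : t * ‖v‖ = ε / 2 := by rw [htd]; field_simp
        rw [Metric.mem_ball]
        rw [Metric.mem_ball] at hz
        rw [h2, h3] at h1
        linarith
      obtain ⟨y', hy', hfy'⟩ := hball (x + ((1:ℝ)*t) • v) r hr0
        (fun z hz => hdist 1 (by norm_num) z hz)
      obtain ⟨x', hx', hfx'⟩ := hball (x + ((-1:ℝ)*t) • v) r hr0
        (fun z hz => hdist (-1) (by norm_num) z hz)
      -- inner product values at centers
      have hac : ∀ σ : ℝ, ⟪α, x + (σ*t) • v⟫_ℝ = s + σ*t*(1-c) := by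
        intro σ; rw [inner_add_right, real_inner_smul_right, hvα, hs]
      have hβc : ∀ σ : ℝ, ⟪β, x + (σ*t) • v⟫_ℝ = ⟪β, x⟫_ℝ - σ*t*(1-c) := by
        intro σ; rw [inner_add_right, real_inner_smul_right, hvβ]; ring
      have hay := hib α y' _ hα r hy'
      have hax := hib α x' _ hα r hx'
      have hby := hib β y' _ hβ r hy'
      have hbx := hib β x' _ hβ r hx'
      rw [hac 1, one_mul] at hay
      rw [hac (-1)] at hax
      rw [hβc 1, one_mul] at hby
      rw [hβc (-1)] at hbx
      rw [abs_sub_lt_iff] at hay hax hby hbx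
      have htc : 0 < t * (1-c) := by positivity
      -- key ordering facts
      have h5 : ⟪α, x'⟫_ℝ < s := by linarith [hax.1, hax.2]
      have h6 : s < ⟪α, y'⟫_ℝ := by linarith [hay.1, hay.2]
      have h7 : ⟪β, y'⟫_ℝ ≤ ⟪β, x'⟫_ℝ := by linarith [hby.1, hby.2, hbx.1, hbx.2]
      have hfeq : f ⟪α, x'⟫_ℝ = f ⟪α, y'⟫_ℝ := by
        refine le_antisymm (hf (by linarith)) ?_
        rw [hfx', hfy']
        exact hh h7
      refine ⟨min (s - ⟪α, x'⟫_ℝ) (⟪α, y'⟫_ℝ - s), lt_min (by linarith) (by linarith), ?_⟩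
      intro u hu
      rw [abs_sub_lt_iff] at hu
      have hu1 : ⟪α, x'⟫_ℝ ≤ u := by
        have := hu.2.trans_le (min_le_left _ _); linarith
      have hu2 : u ≤ ⟪α, y'⟫_ℝ := by
        have := hu.1.trans_le (min_le_right _ _); linarith
      have hfu : f u = f ⟪α, x'⟫_ℝ :=
        le_antisymm (hfeq ▸ hf hu2) (hf hu1)
      have hfs : f s = f ⟪α, x'⟫_ℝ :=
        le_antisymm (hfeq ▸ hf h6.le) (hf h5.le)
      rw [hfu, hfs]
    -- f is constant on J
    have hconstJ := aux_const_of_loc hJconv.ordConnected hloc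
    obtain ⟨y0, hy0⟩ := hint
    have hJy0 : ⟪α, y0⟫_ℝ ∈ J := ⟨y0, hy0, rfl⟩
    -- f is constant on C_α
    have hconstC : ∀ s ∈ (fun x => ⟪α, x⟫_ℝ) '' 𝒳, f s = f ⟪α, y0⟫_ℝ := by
      intro s hsmem
      by_cases hsJ : s ∈ J
      · exact hconstJ s hsJ _ hJy0
      · have hscl : s ∈ closure J := hCsub hsmem
        have hfr : s ∈ frontier ((fun x => ⟪α, x⟫_ℝ) '' 𝒳) := by
          constructor
          · exact subset_closure hsmem
          · intro hint'
            have h8 : s ∈ interior (closure J) := interior_mono hCsub hint'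
            exact hsJ (aux_int_cl hJconv hJopen h8)
        have hcw := hfbd s hsmem hfr
        have hnb : (nhdsWithin s J).NeBot := mem_closure_iff_nhdsWithin_neBot.mp hscl
        have h1 : Filter.Tendsto f (nhdsWithin s J) (nhds (f s)) :=
          hcw.mono_left (nhdsWithin_mono _ hJsubC)
        have h2 : Filter.Tendsto f (nhdsWithin s J) (nhds (f ⟪α, y0⟫_ℝ)) := by
          apply Filter.Tendsto.congr' _ tendsto_const_nhds
          filter_upwards [self_mem_nhdsWithin] with u hu
          exact (hconstJ u hu _ hJy0).symm
        exact tendsto_nhds_unique h1 h2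
    obtain ⟨s, hsC, t, htC, hst⟩ := hnc
    exact hst (by rw [hconstC s hsC, hconstC t htC])
  -- Step 4: f = h on C_α
  subst hab
  refine ⟨rfl, ?_⟩
  have hJeq : ∀ s ∈ J, f s = h s := by
    rintro _ ⟨x, hx, rfl⟩
    obtain ⟨ε, hε, hbs⟩ := Metric.isOpen_iff.mp isOpen_interior x hx
    show f ⟪α, x⟫_ℝ = h ⟪α, x⟫_ℝ
    set s := ⟪α, x⟫_ℝ with hs
    set T := {u : ℝ | u < s ∧ f u = h u} with hT
    have hclo : s ∈ closure T := by
      rw [Metric.mem_closure_iff]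
      intro δ hδ
      set r := min (δ/4) (ε/4) with hrd
      have hr0 : 0 < r := lt_min (by positivity) (by positivity)
      have hsub : Metric.ball (x - (2*r) • α) r ⊆ 𝒳 := by
        intro z hz
        apply interior_subset
        apply hbs
        have h1 : dist z x ≤ dist z (x - (2*r) • α) + dist (x - (2*r) • α) x :=
          dist_triangle _ _ _
        have h2 : dist (x - (2*r) • α) x = 2*r := by
          rw [dist_eq_norm, sub_sub_cancel_left, norm_neg, norm_smul, Real.norm_eq_abs,
            abs_of_pos (by linarith : (0:ℝ) < 2*r), hα, mul_one]
        rw [Metric.mem_ball] at hz ⊢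
        have hr4 : r ≤ ε/4 := min_le_right _ _
        rw [h2] at h1
        linarith
      obtain ⟨x', hx', hfx'⟩ := hball _ r hr0 hsub
      have hcenter : ⟪α, x - (2*r) • α⟫_ℝ = s - 2*r := by
        rw [inner_sub_right, real_inner_smul_right, real_inner_self_eq_norm_mul_norm, hα, hs]
        ring
      have hax := hib α x' _ hα r hx'
      rw [hcenter, abs_sub_lt_iff] at hax
      refine ⟨⟪α, x'⟫_ℝ, ⟨by linarith [hax.1, hax.2], hfx'⟩, ?_⟩
      rw [Real.dist_eq, abs_sub_lt_iff]
      have hrδ : r ≤ δ/4 := min_le_left _ _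
      constructor <;> linarith [hax.1, hax.2]
    have hnb : (nhdsWithin s T).NeBot := mem_closure_iff_nhdsWithin_neBot.mp hclo
    have hsC : s ∈ (fun x => ⟪α, x⟫_ℝ) '' 𝒳 := ⟨x, interior_subset hx, rfl⟩
    have hTle : T ⊆ Set.Iic s := fun u hu => le_of_lt hu.1
    have hfT : Filter.Tendsto f (nhdsWithin s T) (nhds (f s)) :=
      (hflc s hsC).mono_left (nhdsWithin_mono _ hTle)
    have hhT : Filter.Tendsto h (nhdsWithin s T) (nhds (h s)) :=
      (hhlc s hsC).mono_left (nhdsWithin_mono _ hTle)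
    have hhT' : Filter.Tendsto f (nhdsWithin s T) (nhds (h s)) := by
      apply Filter.Tendsto.congr' _ hhT
      filter_upwards [self_mem_nhdsWithin] with u hu
      exact hu.2.symm
    exact tendsto_nhds_unique hfT hhT'
  intro s hsmem
  by_cases hsJ : s ∈ J
  · exact hJeq s hsJ
  · have hscl : s ∈ closure J := hCsub hsmem
    have hfr : s ∈ frontier ((fun x => ⟪α, x⟫_ℝ) '' 𝒳) := by
      constructor
      · exact subset_closure hsmem
      · intro hint'
        have h8 : s ∈ interior (closure J) := interior_mono hCsub hint'
        exact hsJ (aux_int_cl hJconv hJopen h8)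
    have hnb : (nhdsWithin s J).NeBot := mem_closure_iff_nhdsWithin_neBot.mp hscl
    have h1 : Filter.Tendsto f (nhdsWithin s J) (nhds (f s)) :=
      (hfbd s hsmem hfr).mono_left (nhdsWithin_mono _ hJsubC)
    have h2 : Filter.Tendsto h (nhdsWithin s J) (nhds (h s)) :=
      (hhbd s hsmem hfr).mono_left (nhdsWithin_mono _ hJsubC)
    have h2' : Filter.Tendsto f (nhdsWithin s J) (nhds (h s)) := by
      apply Filter.Tendsto.congr' _ h2
      filter_upwards [self_mem_nhdsWithin] with u hu
      exact (hJeq u hu).symm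
    exact tendsto_nhds_unique h1 h2'
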